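/- Suppose w : (0, ∞) → ℝ is twice differentiable with w(v) > 0 for all v > 0, and satisfies d₁·θ₂·log w(v) − d₂·θ₁·log v + (g₁₁·θ₂ − g₂₁·θ₁)·w(v) + (g₁₂·θ₂ − g₂₂·θ₁)·v = θ₂·c₁ − θ₁·c₂ for all v > 0 (the relation obtained from (AE) by eliminating φ). Then for every v > 0: w'(v) = w(v)·(d₂·θ₁ + g₂₂·θ₁·v − g₁₂·θ₂·v)/(v·(d₁·θ₂ + g₁₁·θ₂·w(v) − g₂₁·θ₁·w(v))) < 0, and w''(v) = (d₁·θ₂·v²·w'(v)² − d₂·θ₁·w(v)²)/(v²·w(v)·(d₁·θ₂ + g₁₁·θ₂·w(v) − g₂₁·θ₁·w(v))) > 0. (Proposition 2.5(iii): monotonicity and convexity of u as a function of v.) -/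
import Mathlib

/-- Proposition 2.5(iii): monotonicity and convexity of `u` as a function of
`v` along the φ-eliminated relation obtained from (AE). -/
theorem stmt_7 (d₁ d₂ θ₁ θ₂ g₁₁ g₁₂ g₂₁ g₂₂ c₁ c₂ : ℝ)
    (hd₁ : 0 < d₁) (hd₂ : 0 < d₂) (hθ₁ : 0 < θ₁) (hθ₂ : θ₂ < 0)
    (hg₁₁ : 0 < g₁₁) (hg₁₂ : 0 < g₁₂) (hg₂₁ : 0 < g₂₁) (hg₂₂ : 0 < g₂₂)
    (w : ℝ → ℝ)
    (hdiff : ∀ v : ℝ, 0 < v → DifferentiableAt ℝ w v)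
    (hdiff2 : ∀ v : ℝ, 0 < v → DifferentiableAt ℝ (deriv w) v)
    (hpos : ∀ v : ℝ, 0 < v → 0 < w v)
    (hrel : ∀ v : ℝ, 0 < v →
      d₁ * θ₂ * Real.log (w v) - d₂ * θ₁ * Real.log v +
        (g₁₁ * θ₂ - g₂₁ * θ₁) * w v + (g₁₂ * θ₂ - g₂₂ * θ₁) * v = θ₂ * c₁ - θ₁ * c₂) :
    ∀ v : ℝ, 0 < v →
      (deriv w v = w v * (d₂ * θ₁ + g₂₂ * θ₁ * v - g₁₂ * θ₂ * v) /
          (v * (d₁ * θ₂ + g₁₁ * θ₂ * w v - g₂₁ * θ₁ * w v)) ∧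
        deriv w v < 0) ∧
      (deriv (deriv w) v =
          (d₁ * θ₂ * v ^ 2 * (deriv w v) ^ 2 - d₂ * θ₁ * (w v) ^ 2) /
            (v ^ 2 * w v * (d₁ * θ₂ + g₁₁ * θ₂ * w v - g₂₁ * θ₁ * w v)) ∧
        0 < deriv (deriv w) v) := by
  have key : ∀ x : ℝ, 0 < x →
      deriv w x * (x * (d₁ * θ₂ + (g₁₁ * θ₂ - g₂₁ * θ₁) * w x)) =
        w x * (d₂ * θ₁ + (g₂₂ * θ₁ - g₁₂ * θ₂) * x) := by
    intro x hx
    have hwx := hpos x hx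
    have hw := (hdiff x hx).hasDerivAt
    have h1 : HasDerivAt (fun y => d₁ * θ₂ * Real.log (w y) - d₂ * θ₁ * Real.log y +
        (g₁₁ * θ₂ - g₂₁ * θ₁) * w y + (g₁₂ * θ₂ - g₂₂ * θ₁) * y)
        (d₁ * θ₂ * (deriv w x / w x) - d₂ * θ₁ * x⁻¹ +
          (g₁₁ * θ₂ - g₂₁ * θ₁) * deriv w x + (g₁₂ * θ₂ - g₂₂ * θ₁) * 1) x := by
      exact ((((hw.log hwx.ne').const_mul _).sub
        ((Real.hasDerivAt_log hx.ne').const_mul _)).add (hw.const_mul _)).add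
        ((hasDerivAt_id x).const_mul _)
    have heq : (fun y => d₁ * θ₂ * Real.log (w y) - d₂ * θ₁ * Real.log y +
        (g₁₁ * θ₂ - g₂₁ * θ₁) * w y + (g₁₂ * θ₂ - g₂₂ * θ₁) * y)
        =ᶠ[nhds x] fun _ => θ₂ * c₁ - θ₁ * c₂ :=
      Filter.eventually_of_mem (Ioi_mem_nhds hx) (fun y hy => hrel y hy)
    have h0 : HasDerivAt (fun y => d₁ * θ₂ * Real.log (w y) - d₂ * θ₁ * Real.log y +
        (g₁₁ * θ₂ - g₂₁ * θ₁) * w y + (g₁₂ * θ₂ - g₂₂ * θ₁) * y) 0 x :=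
      (hasDerivAt_const x _).congr_of_eventuallyEq heq
    have hE := h1.unique h0
    have hx0 : x ≠ 0 := hx.ne'
    have hw0 : w x ≠ 0 := hwx.ne'
    field_simp at hE
    linarith [hE]
  intro v hv
  have hwv := hpos v hv
  have hX : d₁ * θ₂ + g₁₁ * θ₂ * w v - g₂₁ * θ₁ * w v < 0 := by
    have h1 : d₁ * θ₂ < 0 := mul_neg_of_pos_of_neg hd₁ hθ₂
    have h2 : g₁₁ * θ₂ * w v < 0 :=
      mul_neg_of_neg_of_pos (mul_neg_of_pos_of_neg hg₁₁ hθ₂) hwv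
    have h3 : 0 < g₂₁ * θ₁ * w v := by positivity
    linarith
  have hden1 : v * (d₁ * θ₂ + g₁₁ * θ₂ * w v - g₂₁ * θ₁ * w v) < 0 :=
    mul_neg_of_pos_of_neg hv hX
  have hnum1 : 0 < w v * (d₂ * θ₁ + g₂₂ * θ₁ * v - g₁₂ * θ₂ * v) := by
    have h1 : 0 < d₂ * θ₁ := mul_pos hd₂ hθ₁
    have h2 : 0 < g₂₂ * θ₁ * v := by positivity
    have h3 : g₁₂ * θ₂ * v < 0 :=
      mul_neg_of_neg_of_pos (mul_neg_of_pos_of_neg hg₁₂ hθ₂) hv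
    have : 0 < d₂ * θ₁ + g₂₂ * θ₁ * v - g₁₂ * θ₂ * v := by linarith
    exact mul_pos hwv this
  have hkv := key v hv
  have hd1 : deriv w v = w v * (d₂ * θ₁ + g₂₂ * θ₁ * v - g₁₂ * θ₂ * v) /
      (v * (d₁ * θ₂ + g₁₁ * θ₂ * w v - g₂₁ * θ₁ * w v)) := by
    rw [eq_div_iff hden1.ne]
    linear_combination hkv
  have hd1neg : deriv w v < 0 := by nlinarith
  -- second derivative
  have hw := (hdiff v hv).hasDerivAt
  have hw2 := (hdiff2 v hv).hasDerivAt
  have hInner : HasDerivAt (fun y => y * (d₁ * θ₂ + (g₁₁ * θ₂ - g₂₁ * θ₁) * w y))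
      (1 * (d₁ * θ₂ + (g₁₁ * θ₂ - g₂₁ * θ₁) * w v) +
        v * (0 + (g₁₁ * θ₂ - g₂₁ * θ₁) * deriv w v)) v :=
    (hasDerivAt_id v).mul ((hasDerivAt_const v _).add (hw.const_mul _))
  have hB : HasDerivAt (fun y => w y * (d₂ * θ₁ + (g₂₂ * θ₁ - g₁₂ * θ₂) * y))
      (deriv w v * (d₂ * θ₁ + (g₂₂ * θ₁ - g₁₂ * θ₂) * v) +
        w v * (0 + (g₂₂ * θ₁ - g₁₂ * θ₂) * 1)) v :=
    hw.mul ((hasDerivAt_const v _).add ((hasDerivAt_id v).const_mul _))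
  have hP : HasDerivAt (fun y => deriv w y * (y * (d₁ * θ₂ + (g₁₁ * θ₂ - g₂₁ * θ₁) * w y)) -
      w y * (d₂ * θ₁ + (g₂₂ * θ₁ - g₁₂ * θ₂) * y))
      ((deriv (deriv w) v * (v * (d₁ * θ₂ + (g₁₁ * θ₂ - g₂₁ * θ₁) * w v)) +
        deriv w v * (1 * (d₁ * θ₂ + (g₁₁ * θ₂ - g₂₁ * θ₁) * w v) +
          v * (0 + (g₁₁ * θ₂ - g₂₁ * θ₁) * deriv w v))) -
        (deriv w v * (d₂ * θ₁ + (g₂₂ * θ₁ - g₁₂ * θ₂) * v) +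
          w v * (0 + (g₂₂ * θ₁ - g₁₂ * θ₂) * 1))) v :=
    (hw2.mul hInner).sub hB
  have heqP : (fun y => deriv w y * (y * (d₁ * θ₂ + (g₁₁ * θ₂ - g₂₁ * θ₁) * w y)) -
      w y * (d₂ * θ₁ + (g₂₂ * θ₁ - g₁₂ * θ₂) * y)) =ᶠ[nhds v] fun _ => (0 : ℝ) :=
    Filter.eventually_of_mem (Ioi_mem_nhds hv) (fun y hy => by
      have := key y hy; simp [this])
  have hP0 : HasDerivAt (fun y => deriv w y * (y * (d₁ * θ₂ + (g₁₁ * θ₂ - g₂₁ * θ₁) * w y)) -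
      w y * (d₂ * θ₁ + (g₂₂ * θ₁ - g₁₂ * θ₂) * y)) 0 v :=
    (hasDerivAt_const v _).congr_of_eventuallyEq heqP
  have hEp := hP.unique hP0
  have hden2 : v ^ 2 * w v * (d₁ * θ₂ + g₁₁ * θ₂ * w v - g₂₁ * θ₁ * w v) < 0 := by
    have : 0 < v ^ 2 * w v := by positivity
    exact mul_neg_of_pos_of_neg this hX
  have hd2 : deriv (deriv w) v =
      (d₁ * θ₂ * v ^ 2 * (deriv w v) ^ 2 - d₂ * θ₁ * (w v) ^ 2) /
        (v ^ 2 * w v * (d₁ * θ₂ + g₁₁ * θ₂ * w v - g₂₁ * θ₁ * w v)) := by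
    rw [eq_div_iff hden2.ne]
    linear_combination (v * w v) * hEp - (v * deriv w v + w v) * hkv
  have hnum2 : d₁ * θ₂ * v ^ 2 * (deriv w v) ^ 2 - d₂ * θ₁ * (w v) ^ 2 < 0 := by
    have h1 : 0 < d₂ * θ₁ * w v ^ 2 := mul_pos (mul_pos hd₂ hθ₁) (pow_pos hwv 2)
    have h2 : d₁ * θ₂ * v ^ 2 * deriv w v ^ 2 ≤ 0 := by
      have hnn : 0 ≤ v ^ 2 * deriv w v ^ 2 := by positivity
      nlinarith [mul_neg_of_pos_of_neg hd₁ hθ₂]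
    linarith
  refine ⟨⟨hd1, hd1neg⟩, hd2, ?_⟩
  rw [hd2]
  exact div_pos_of_neg_of_neg hnum2 hden2
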